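/- arXiv:2209.03908 — 4 statements merged into one kernel-verified Lean document; each statement's English description precedes it below -/
import Mathlib

section
/- For every pair x, y ∈ [0,1] with x + y < 2, there exists an instance with two agents, two goods, and entitlements summing to 1, such that no lottery over deterministic allocations is simultaneously ex-ante weighted envy-free and supported only on WEF(x,y) allocations. Concretely: with two goods each valued 1 by both agents, and entitlements w₁ ∈ (y/(2+y−x), 1/2), w₂ = 1 − w₁, any ex-ante WEF lottery must place positive probability on the allocation giving both goods to agent 2, and that allocation is not WEF(x,y). -/
open Finset

/-- Bundle of agent `i` under deterministic allocation `A` (good ↦ agent). -/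
def bundle (A : Fin 2 → Fin 2) (i : Fin 2) : Finset (Fin 2) :=
  Finset.univ.filter (fun g => A g = i)

/-- Fractional allocation induced by a lottery `p`: probability that good `g` goes to agent `i`. -/
def fracAlloc (p : (Fin 2 → Fin 2) → ℝ) (i g : Fin 2) : ℝ :=
  ∑ A ∈ Finset.univ.filter (fun A : Fin 2 → Fin 2 => A g = i), p A

/-- Ex-ante weighted envy-freeness of a lottery. -/
def ExAnteWEF (p : (Fin 2 → Fin 2) → ℝ) (w : Fin 2 → ℝ) (v : Fin 2 → Fin 2 → ℝ) : Prop :=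
  ∀ i j : Fin 2,
    (∑ g, fracAlloc p j g * v i g) / w j ≤ (∑ g, fracAlloc p i g * v i g) / w i

/-- WEF(x,y) for a deterministic allocation. -/
def WEFxy (x y : ℝ) (A : Fin 2 → Fin 2) (w : Fin 2 → ℝ) (v : Fin 2 → Fin 2 → ℝ) : Prop :=
  ∀ i j : Fin 2, (bundle A j).Nonempty →
    ∃ g ∈ bundle A j,
      ((∑ g' ∈ bundle A j, v i g') - x * v i g) / w j ≤
      ((∑ g' ∈ bundle A i, v i g') + y * v i g) / w i

/-- For x + y < 2, ex-ante WEF is incompatible with ex-post WEF(x,y): any ex-ante WEF lottery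
puts positive probability on the allocation giving both goods to agent 2 (index 1),
and that allocation is not WEF(x,y). -/
theorem stmt0 (x y : ℝ) (hx0 : 0 ≤ x) (hx1 : x ≤ 1) (hy0 : 0 ≤ y) (hy1 : y ≤ 1)
    (hxy : x + y < 2) (w1 : ℝ) (hw1l : y / (2 + y - x) < w1) (hw1r : w1 < 1 / 2)
    (w : Fin 2 → ℝ) (hw : w = ![w1, 1 - w1])
    (v : Fin 2 → Fin 2 → ℝ) (hv : ∀ i g, v i g = 1)
    (p : (Fin 2 → Fin 2) → ℝ) (hp0 : ∀ A, 0 ≤ p A) (hp1 : ∑ A, p A = 1)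
    (hWEF : ExAnteWEF p w v) :
    0 < p (fun _ => 1) ∧ ¬ WEFxy x y (fun _ => 1) w v := by
  have hden : 0 < 2 + y - x := by linarith
  have hw1pos : 0 < w1 := lt_of_le_of_lt (div_nonneg hy0 hden.le) hw1l
  have hw2pos : 0 < 1 - w1 := by linarith
  have hfin2 : ∀ a : Fin 2, ¬ a = 0 → a = 1 := by decide
  -- sum over goods of fracAlloc to each agent
  set s : Fin 2 → ℝ := fun i => ∑ g, fracAlloc p i g with hs
  have hsumg : ∀ g : Fin 2, fracAlloc p 0 g + fracAlloc p 1 g = 1 := by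
    intro g
    have hfilt : Finset.univ.filter (fun A : Fin 2 → Fin 2 => ¬ A g = 0)
        = Finset.univ.filter (fun A : Fin 2 → Fin 2 => A g = 1) := by
      apply Finset.filter_congr
      intro A _
      constructor
      · exact hfin2 _
      · intro h h0; rw [h0] at h; exact absurd h (by decide)
    have := Finset.sum_filter_add_sum_filter_not (Finset.univ : Finset (Fin 2 → Fin 2))
      (fun A => A g = 0) p
    rw [hfilt] at this
    simpa [fracAlloc, hp1] using this
  have hstot : s 0 + s 1 = 2 := by
    have : s 0 + s 1 = ∑ g : Fin 2, (fracAlloc p 0 g + fracAlloc p 1 g) := by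
      rw [hs]; rw [Finset.sum_add_distrib]
    rw [this]
    simp [hsumg]
  -- ex-ante WEF forces s 0 = 2 * w1
  have h01 := hWEF 0 1
  have h10 := hWEF 1 0
  simp only [hv, mul_one, hw, Matrix.cons_val_zero, Matrix.cons_val_one, Matrix.head_cons] at h01 h10
  have heq : s 0 / w1 = s 1 / (1 - w1) := le_antisymm h10 h01
  have hs0 : s 0 = 2 * w1 := by
    rw [div_eq_div_iff hw1pos.ne' hw2pos.ne'] at heq
    nlinarith
  -- s 0 as expectation of bundle sizes
  have hC : s 0 = ∑ A : Fin 2 → Fin 2, p A * ((bundle A 0).card : ℝ) := by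
    rw [hs]
    simp only [fracAlloc, Finset.sum_filter]
    rw [Finset.sum_comm]
    refine Finset.sum_congr rfl fun A _ => ?_
    rw [← Finset.sum_filter, Finset.sum_const, nsmul_eq_mul, mul_comm]
    rfl
  constructor
  · by_contra h
    push_neg at h
    have hpz : p (fun _ => 1) = 0 := le_antisymm h (hp0 _)
    have hge : (1:ℝ) ≤ s 0 := by
      rw [← hp1, hC]
      apply Finset.sum_le_sum
      intro A _
      by_cases hA : A = fun _ => (1 : Fin 2)
      · rw [hA, hpz]; simp
      · have hex : ∃ g, A g = 0 := by
          by_contra hg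
          push_neg at hg
          exact hA (funext fun g => hfin2 _ (hg g))
        obtain ⟨g, hg⟩ := hex
        have hcard : 1 ≤ (bundle A 0).card :=
          Finset.card_pos.mpr ⟨g, by simp [bundle, hg]⟩
        have : (1:ℝ) ≤ ((bundle A 0).card : ℝ) := by exact_mod_cast hcard
        nlinarith [hp0 A]
    linarith
  · intro hW
    obtain ⟨g, hg, hineq⟩ := hW 0 1 ⟨0, by simp [bundle]⟩
    have hb1 : bundle (fun _ => (1 : Fin 2)) 1 = Finset.univ := by
      simp [bundle]
    have hb0 : bundle (fun _ => (1 : Fin 2)) 0 = ∅ := by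
      simp [bundle]
    rw [hb1, hb0] at hineq
    simp only [hv, hw, Fin.sum_univ_two, Finset.sum_empty, mul_one,
      Matrix.cons_val_zero, Matrix.cons_val_one, Matrix.head_cons] at hineq
    rw [div_le_div_iff₀ hw2pos hw1pos] at hineq
    have hle : w1 ≤ y / (2 + y - x) := by
      rw [le_div_iff₀ hden]
      nlinarith
    linarith
end

section
/- In the two-agent, two-identical-goods instance with entitlements w₁ < 1/2 and w₂ = 1 − w₁, any lottery over deterministic allocations that is ex-ante weighted envy-free must assign positive probability to the allocation in which agent 2 receives both goods. -/
open Finset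

/-- With two identical goods and w₁ < 1/2, any ex-ante WEF lottery gives positive probability
to the allocation in which agent 2 (index 1) receives both goods. -/
theorem stmt1 (w1 : ℝ) (hw1l : 0 < w1) (hw1r : w1 < 1 / 2)
    (w : Fin 2 → ℝ) (hw : w = ![w1, 1 - w1])
    (v : Fin 2 → Fin 2 → ℝ) (hv : ∀ i g, v i g = 1)
    (p : (Fin 2 → Fin 2) → ℝ) (hp0 : ∀ A, 0 ≤ p A) (hp1 : ∑ A, p A = 1)
    (hWEF : ExAnteWEF p w v) :
    0 < p (fun _ => 1) := by
  set t : ℝ := ∑ g, fracAlloc p 0 g with ht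
  -- t as a sum over allocations
  have htA : t = ∑ A : Fin 2 → Fin 2,
      p A * ((Finset.univ.filter (fun g => A g = 0)).card : ℝ) := by
    rw [ht]
    simp only [fracAlloc, Finset.sum_filter]
    rw [Finset.sum_comm]
    refine Finset.sum_congr rfl fun A _ => ?_
    rw [← Finset.sum_filter, Finset.sum_const, nsmul_eq_mul, mul_comm]
  -- each good is allocated with total probability 1
  have hsum2 : ∀ g : Fin 2, fracAlloc p 0 g + fracAlloc p 1 g = 1 := by
    intro g
    have hfilt : Finset.univ.filter (fun A : Fin 2 → Fin 2 => A g = 1)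
        = Finset.univ.filter (fun A : Fin 2 → Fin 2 => ¬ A g = 0) := by
      refine Finset.filter_congr fun A _ => ?_
      constructor
      · intro h; rw [h]; exact one_ne_zero
      · intro h
        have : ∀ a : Fin 2, a ≠ 0 → a = 1 := by decide
        exact this _ h
    rw [fracAlloc, fracAlloc, hfilt, Finset.sum_filter_add_sum_filter_not, hp1]
  have hsum1 : (∑ g, fracAlloc p 1 g) = 2 - t := by
    have h0 := hsum2 0
    have h1 := hsum2 1
    rw [ht]
    simp only [Fin.sum_univ_two] at *
    linarith
  -- the WEF condition for agent 1 envying agent 0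
  have hW := hWEF 1 0
  simp only [hv, mul_one, hw, hsum1, ← ht] at hW
  have hw0 : (![w1, 1 - w1] : Fin 2 → ℝ) 0 = w1 := rfl
  have hw1 : (![w1, 1 - w1] : Fin 2 → ℝ) 1 = 1 - w1 := rfl
  rw [hw0, hw1] at hW
  have h1w : (0:ℝ) < 1 - w1 := by linarith
  have htlt : t < 1 := by
    rw [div_le_div_iff₀ hw1l h1w] at hW
    nlinarith
  -- now suppose p (fun _ => 1) = 0
  by_contra hcon
  push_neg at hcon
  have hzero : p (fun _ => 1) = 0 := le_antisymm hcon (hp0 _)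
  -- then t ≥ 1
  have hge : ∀ A : Fin 2 → Fin 2,
      p A ≤ p A * ((Finset.univ.filter (fun g => A g = 0)).card : ℝ) := by
    intro A
    by_cases hA : A = fun _ => 1
    · subst hA; rw [hzero]; simp
    · have : ∃ g, A g = 0 := by
        by_contra hno
        push_neg at hno
        apply hA
        funext g
        have h2 : ∀ a : Fin 2, a ≠ 0 → a = 1 := by decide
        exact h2 _ (hno g)
      obtain ⟨g, hg⟩ := this
      have hcard : 1 ≤ ((Finset.univ.filter (fun g => A g = 0)).card : ℝ) := by
        have : 0 < (Finset.univ.filter (fun g => A g = 0)).card :=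
          Finset.card_pos.mpr ⟨g, Finset.mem_filter.mpr ⟨Finset.mem_univ g, hg⟩⟩
        exact_mod_cast this
      nlinarith [hp0 A]
  have : (1:ℝ) ≤ t := by
    rw [htA, ← hp1]
    exact Finset.sum_le_sum fun A _ => hge A
  linarith
end

section
/- Let s: G → ℝ be stopping times for goods in a deterministic allocation Y, where agent i's bundle Y_i = {g₁ⁱ,…,g_{h_i}ⁱ} is sorted by non-increasing v_i and s(g_kⁱ) ∈ ((k−1)/w_i, k/w_i]. Suppose the picking sequence π orders goods by non-decreasing stopping time, with π's h-th pick being the owner of the h-th good. Then for any prefix of π and any agents i,j, if j has picked t_j times and i has picked t_i times within the prefix, then (t_j − 1)/w_j < (t_i + 1)/w_i. -/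
open Finset

/-- Picking in non-decreasing order of stopping times: for any prefix of the picking sequence
and any agents `i`, `j` with pick counts `t_i`, `t_j` in the prefix,
`(t_j - 1)/w_j < (t_i + 1)/w_i`. -/
theorem stmt6 {ι : Type*} [DecidableEq ι] (m : ℕ) (w : ι → ℝ) (hw : ∀ a, 0 < w a)
    (π : Fin m → ι) (s : Fin m → ℝ) (hs : Monotone s) (hsm : ∀ h, s h ≤ (m : ℝ))
    (cnt : ι → ℕ → ℕ)
    (hcnt : ∀ a h, cnt a h
      = (Finset.univ.filter (fun h' : Fin m => (h' : ℕ) < h ∧ π h' = a)).card)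
    (hbound : ∀ h : Fin m,
      ((cnt (π h) ((h : ℕ) + 1) : ℝ) - 1) / w (π h) < s h ∧
        s h ≤ (cnt (π h) ((h : ℕ) + 1) : ℝ) / w (π h))
    (hfull : ∀ a : ι, (m : ℝ) < ((cnt a m : ℝ) + 1) / w a) :
    ∀ h : ℕ, h ≤ m → ∀ i j : ι,
      ((cnt j h : ℝ) - 1) / w j < ((cnt i h : ℝ) + 1) / w i := by
  intro h hh i j
  have hwi := hw i
  have hwj := hw j
  rcases Nat.eq_zero_or_pos (cnt j h) with hj0 | hj1
  · rw [hj0]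
    have h1 : ((0 : ℕ) : ℝ) - 1 < 0 := by norm_num
    have h2 : (((0 : ℕ) : ℝ) - 1) / w j < 0 := div_neg_of_neg_of_pos h1 hwj
    have h3 : (0 : ℝ) ≤ ((cnt i h : ℝ) + 1) / w i := by positivity
    linarith
  · -- last occurrence of j before h
    obtain ⟨h', hh'lt, hπ', hcnt'⟩ :
        ∃ h' : Fin m, (h' : ℕ) < h ∧ π h' = j ∧ cnt j ((h' : ℕ) + 1) = cnt j h := by
      have hne : (univ.filter (fun x : Fin m => (x : ℕ) < h ∧ π x = j)).Nonempty := by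
        rw [← Finset.card_pos, ← hcnt]; exact hj1
      set S := univ.filter (fun x : Fin m => (x : ℕ) < h ∧ π x = j) with hS
      have hmax := Finset.mem_filter.mp (S.max'_mem hne)
      refine ⟨S.max' hne, hmax.2.1, hmax.2.2, ?_⟩
      rw [hcnt, hcnt]
      congr 1
      ext x
      simp only [Finset.mem_filter, Finset.mem_univ, true_and]
      constructor
      · rintro ⟨hx, hxe⟩
        exact ⟨by omega, hxe⟩
      · rintro ⟨hx, hxe⟩
        have hxS : x ∈ S := by rw [hS, Finset.mem_filter]; exact ⟨Finset.mem_univ _, hx, hxe⟩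
        have := S.le_max' x hxS
        rw [Fin.le_def] at this
        exact ⟨by omega, hxe⟩
    have hlow : ((cnt j h : ℝ) - 1) / w j < s h' := by
      have := (hbound h').1
      rw [hπ', hcnt'] at this
      exact this
    -- first occurrence of i at or after h, if any
    by_cases hTne : (univ.filter (fun x : Fin m => h ≤ (x : ℕ) ∧ π x = i)).Nonempty
    · set T := univ.filter (fun x : Fin m => h ≤ (x : ℕ) ∧ π x = i) with hT
      have hmin := Finset.mem_filter.mp (T.min'_mem hTne)
      set h'' := T.min' hTne with hdef
      have hcnt'' : cnt i ((h'' : ℕ) + 1) = cnt i h + 1 := by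
        rw [hcnt, hcnt]
        have hnotmem : h'' ∉ univ.filter (fun x : Fin m => (x : ℕ) < h ∧ π x = i) := by
          simp only [Finset.mem_filter, Finset.mem_univ, true_and, not_and]
          intro hx; omega
        rw [← Finset.card_insert_of_notMem hnotmem]
        congr 1
        ext x
        simp only [Finset.mem_insert, Finset.mem_filter, Finset.mem_univ, true_and]
        constructor
        · rintro ⟨hx, hxe⟩
          by_cases hxh : (x : ℕ) < h
          · exact Or.inr ⟨hxh, hxe⟩
          · left
            have hxT : x ∈ T := by
              rw [hT, Finset.mem_filter]; exact ⟨Finset.mem_univ _, by omega, hxe⟩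
            have := T.min'_le x hxT
            rw [Fin.le_def] at this
            exact (Fin.ext (by omega)).symm
        · rintro (rfl | ⟨hx, hxe⟩)
          · exact ⟨by omega, hmin.2.2⟩
          · exact ⟨by omega, hxe⟩
      have hup : s h'' ≤ ((cnt i h : ℝ) + 1) / w i := by
        have := (hbound h'').2
        rw [hmin.2.2, hcnt''] at this
        push_cast at this
        exact this
      have hmono : s h' ≤ s h'' := by
        apply hs
        rw [Fin.le_def]
        omega
      linarith
    · -- i never picks at or after h
      have hcim : cnt i m = cnt i h := by
        rw [hcnt, hcnt]
        congr 1
        ext x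
        simp only [Finset.mem_filter, Finset.mem_univ, true_and]
        constructor
        · rintro ⟨hx, hxe⟩
          refine ⟨?_, hxe⟩
          by_contra hxh
          exact hTne ⟨x, by simp [Finset.mem_filter, hxe]; omega⟩
        · rintro ⟨hx, hxe⟩
          exact ⟨by omega, hxe⟩
      have := hfull i
      rw [hcim] at this
      have hsh := hsm h'
      linarith
end

section
/- (Lemma on stopping time bounds.) If g_kⁱ is the k-th most preferred good in agent i's bundle Y_i, with eating time t(g_kⁱ), and stopping time s(g_kⁱ) := min(t(g_kⁱ), k/w_i), and if the decomposition property holds that |Y_i ∩ Eaten(i, (k−1)/w_i)| ≤ k−1, and eating times of i's goods are non-decreasing in k and goods with eating time ≤ (k−1)/w_i are contained in Eaten(i,(k−1)/w_i), then s(g_kⁱ) ∈ ((k−1)/w_i, k/w_i]. -/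
open Finset

/-- Stopping time bounds: the stopping time `min (t g_k) (k / w_i)` of the `k`-th most
preferred good in agent `i`'s bundle lies in the interval `((k-1)/w_i, k/w_i]`.
Here `gs a` is the `(a+1)`-th good (`a : Fin h` is zero-based). -/
theorem stmt7 {G : Type*} [DecidableEq G] (wi : ℝ) (hwi : 0 < wi) (h : ℕ)
    (gs : Fin h → G) (hinj : Function.Injective gs)
    (t : G → ℝ) (ht : ∀ g, 0 < t g)
    (hmono : ∀ a b : Fin h, a ≤ b → t (gs a) ≤ t (gs b))
    (Eaten : ℝ → Finset G)
    (hcontain : ∀ (τ : ℝ) (a : Fin h), t (gs a) ≤ τ → gs a ∈ Eaten τ)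
    (hcard : ∀ a : Fin h,
      (Finset.univ.filter (fun b : Fin h => gs b ∈ Eaten (((a : ℕ) : ℝ) / wi))).card
        ≤ (a : ℕ)) :
    ∀ a : Fin h,
      ((a : ℕ) : ℝ) / wi < min (t (gs a)) ((((a : ℕ) : ℝ) + 1) / wi) ∧
      min (t (gs a)) ((((a : ℕ) : ℝ) + 1) / wi) ≤ (((a : ℕ) : ℝ) + 1) / wi := by
  intro a
  refine ⟨lt_min ?_ (by gcongr; linarith), min_le_right _ _⟩
  by_contra hle
  push_neg at hle
  have hsub : (Finset.univ.filter (fun b : Fin h => b ≤ a)) ⊆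
      (Finset.univ.filter (fun b : Fin h => gs b ∈ Eaten (((a : ℕ) : ℝ) / wi))) := by
    intro b hb
    simp only [mem_filter, mem_univ, true_and] at hb ⊢
    exact hcontain _ b (le_trans (hmono b a hb) hle)
  have hcard2 := (Finset.card_le_card hsub).trans (hcard a)
  have : (Finset.univ.filter (fun b : Fin h => b ≤ a)).card = (a : ℕ) + 1 := by
    have : (Finset.univ.filter (fun b : Fin h => b ≤ a)) = Finset.Iic a := by
      ext b; simp
    rw [this, Fin.card_Iic]
  omega
end
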